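/- Let ρ₁₁, ρ₁₂, ρ₂₂ ≥ 0 be real numbers, H₁₁ an N₁×M₁ complex matrix, H₁₂ an N₂×M₁ complex matrix, and H₂₂ an N₂×M₂ complex matrix. Then det(I_{N₂} + ρ₂₂ H₂₂ H₂₂† + ρ₁₂ H₁₂ H₁₂†) · det(I_{N₁} + ρ₁₁ H₁₁ H₁₁† − ρ₁₁ ρ₁₂ H₁₁ H₁₂† (I_{N₂} + ρ₁₂ H₁₂ H₁₂†)^{-1} H₁₂ H₁₁†) = det(I_{M₁} + ρ₁₁ H₁₁† H₁₁ + ρ₁₂ H₁₂† H₁₂) · det(I_{M₂} + ρ₂₂ H₂₂† H₂₂ − ρ₂₂ ρ₁₂ H₂₂† H₁₂ (I_{M₁} + ρ₁₂ H₁₂† H₁₂)^{-1} H₁₂† H₂₂); i.e., the fifth outer bound for the MIMO IC with feedback equals the sixth outer bound of its reciprocal channel. The matrices I_{N₂} + ρ₁₂ H₁₂ H₁₂† and I_{M₁} + ρ₁₂ H₁₂† H₁₂ are Hermitian positive definite, hence invertible. -/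

import Mathlib

open scoped ComplexOrder Matrix

lemma smul_mul_conjTranspose_posSemidef {n m : ℕ} {ρ : ℝ} (hρ : 0 ≤ ρ)
    (H : Matrix (Fin n) (Fin m) ℂ) : ((ρ : ℂ) • (H * Hᴴ)).PosSemidef := by
  have h : (ρ : ℂ) • (H * Hᴴ) = ((Real.sqrt ρ : ℂ) • H) * ((Real.sqrt ρ : ℂ) • H)ᴴ := by
    rw [Matrix.conjTranspose_smul, Matrix.smul_mul, Matrix.mul_smul, smul_smul]
    congr 1
    simp [Complex.star_def, ← Complex.ofReal_mul, Real.mul_self_sqrt hρ]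
  rw [h]
  exact Matrix.posSemidef_self_mul_conjTranspose _

lemma one_add_posDef {n m : ℕ} {ρ : ℝ} (hρ : 0 ≤ ρ) (H : Matrix (Fin n) (Fin m) ℂ) :
    ((1 : Matrix (Fin n) (Fin n) ℂ) + (ρ : ℂ) • (H * Hᴴ)).PosDef :=
  Matrix.PosDef.add_posSemidef Matrix.PosDef.one (smul_mul_conjTranspose_posSemidef hρ H)

lemma one_add_isUnit_det {n m : ℕ} {ρ : ℝ} (hρ : 0 ≤ ρ) (H : Matrix (Fin n) (Fin m) ℂ) :
    IsUnit ((1 : Matrix (Fin n) (Fin n) ℂ) + (ρ : ℂ) • (H * Hᴴ)).det :=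
  (one_add_posDef hρ H).det_pos.ne'.isUnit

/-- Woodbury-type identity. -/
lemma wood {n m : ℕ} {ρ : ℝ} (hρ : 0 ≤ ρ) (H : Matrix (Fin n) (Fin m) ℂ) :
    ((1 : Matrix (Fin n) (Fin n) ℂ) + (ρ : ℂ) • (H * Hᴴ))⁻¹
      = 1 - (ρ : ℂ) • (H * ((1 : Matrix (Fin m) (Fin m) ℂ) + (ρ : ℂ) • (Hᴴ * H))⁻¹ * Hᴴ) := by
  have hC : IsUnit ((1 : Matrix (Fin m) (Fin m) ℂ) + (ρ : ℂ) • (Hᴴ * H)).det := by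
    simpa using one_add_isUnit_det hρ Hᴴ
  set C := (1 : Matrix (Fin m) (Fin m) ℂ) + (ρ : ℂ) • (Hᴴ * H) with hCdef
  apply Matrix.inv_eq_right_inv
  have key : ((1 : Matrix (Fin n) (Fin n) ℂ) + (ρ : ℂ) • (H * Hᴴ)) * H = H * C := by
    rw [hCdef]
    rw [Matrix.add_mul, Matrix.mul_add, Matrix.one_mul, Matrix.mul_one, Matrix.smul_mul,
      Matrix.mul_smul, Matrix.mul_assoc]
  have hCC : C * C⁻¹ = 1 := Matrix.mul_nonsing_inv _ hC
  calc ((1 : Matrix (Fin n) (Fin n) ℂ) + (ρ : ℂ) • (H * Hᴴ)) *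
        (1 - (ρ : ℂ) • (H * C⁻¹ * Hᴴ))
      = (1 + (ρ : ℂ) • (H * Hᴴ)) -
          (ρ : ℂ) • (((1 + (ρ : ℂ) • (H * Hᴴ)) * H) * (C⁻¹ * Hᴴ)) := by
        rw [Matrix.mul_sub, Matrix.mul_one, Matrix.mul_smul]
        rw [Matrix.mul_assoc, Matrix.mul_assoc]
    _ = 1 := by
        rw [key, Matrix.mul_assoc H C (C⁻¹ * Hᴴ), ← Matrix.mul_assoc C C⁻¹ Hᴴ, hCC,
          Matrix.one_mul]
        abel

/-- Reciprocity of the fifth/sixth outer bounds: for `ρ₁₁, ρ₁₂, ρ₂₂ ≥ 0`,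
`H₁₁ : N₁×M₁`, `H₁₂ : N₂×M₁`, `H₂₂ : N₂×M₂`,
`det(I + ρ₂₂H₂₂H₂₂ᴴ + ρ₁₂H₁₂H₁₂ᴴ) · det(I + ρ₁₁H₁₁H₁₁ᴴ − ρ₁₁ρ₁₂H₁₁H₁₂ᴴ(I + ρ₁₂H₁₂H₁₂ᴴ)⁻¹H₁₂H₁₁ᴴ)
 = det(I + ρ₁₁H₁₁ᴴH₁₁ + ρ₁₂H₁₂ᴴH₁₂) · det(I + ρ₂₂H₂₂ᴴH₂₂ − ρ₂₂ρ₁₂H₂₂ᴴH₁₂(I + ρ₁₂H₁₂ᴴH₁₂)⁻¹H₁₂ᴴH₂₂)`. -/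
theorem reciprocity_fifth_bound {N₁ N₂ M₁ M₂ : ℕ} (ρ₁₁ ρ₁₂ ρ₂₂ : ℝ)
    (hρ₁₁ : 0 ≤ ρ₁₁) (hρ₁₂ : 0 ≤ ρ₁₂) (hρ₂₂ : 0 ≤ ρ₂₂)
    (H11 : Matrix (Fin N₁) (Fin M₁) ℂ) (H12 : Matrix (Fin N₂) (Fin M₁) ℂ)
    (H22 : Matrix (Fin N₂) (Fin M₂) ℂ) :
    ((1 : Matrix (Fin N₂) (Fin N₂) ℂ) + (ρ₂₂ : ℂ) • (H22 * H22ᴴ) +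
        (ρ₁₂ : ℂ) • (H12 * H12ᴴ)).det *
      ((1 : Matrix (Fin N₁) (Fin N₁) ℂ) + (ρ₁₁ : ℂ) • (H11 * H11ᴴ) -
        ((ρ₁₁ * ρ₁₂ : ℝ) : ℂ) •
          (H11 * H12ᴴ * ((1 : Matrix (Fin N₂) (Fin N₂) ℂ) + (ρ₁₂ : ℂ) • (H12 * H12ᴴ))⁻¹ *
            (H12 * H11ᴴ))).det
    = ((1 : Matrix (Fin M₁) (Fin M₁) ℂ) + (ρ₁₁ : ℂ) • (H11ᴴ * H11) +
          (ρ₁₂ : ℂ) • (H12ᴴ * H12)).det *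
        ((1 : Matrix (Fin M₂) (Fin M₂) ℂ) + (ρ₂₂ : ℂ) • (H22ᴴ * H22) -
          ((ρ₂₂ * ρ₁₂ : ℝ) : ℂ) •
            (H22ᴴ * H12 * ((1 : Matrix (Fin M₁) (Fin M₁) ℂ) + (ρ₁₂ : ℂ) • (H12ᴴ * H12))⁻¹ *
              (H12ᴴ * H22))).det := by
  set B := (1 : Matrix (Fin N₂) (Fin N₂) ℂ) + (ρ₁₂ : ℂ) • (H12 * H12ᴴ) with hBdef
  set C := (1 : Matrix (Fin M₁) (Fin M₁) ℂ) + (ρ₁₂ : ℂ) • (H12ᴴ * H12) with hCdef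
  have hdetB : IsUnit B.det := one_add_isUnit_det hρ₁₂ H12
  have hdetC : IsUnit C.det := by
    have := one_add_isUnit_det hρ₁₂ H12ᴴ; rwa [Matrix.conjTranspose_conjTranspose] at this
  have hBinv : B⁻¹ = 1 - (ρ₁₂ : ℂ) • (H12 * C⁻¹ * H12ᴴ) := wood hρ₁₂ H12
  have hCinv : C⁻¹ = 1 - (ρ₁₂ : ℂ) • (H12ᴴ * B⁻¹ * H12) := by
    have := wood hρ₁₂ H12ᴴ; rwa [Matrix.conjTranspose_conjTranspose] at this
  have hCC : C * C⁻¹ = 1 := Matrix.mul_nonsing_inv _ hdetC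
  -- det B = det C
  have hBC : B.det = C.det := by
    rw [hBdef, hCdef, ← Matrix.smul_mul, Matrix.det_one_add_mul_comm, Matrix.mul_smul]
  -- LHS factor 2
  have e1 : (1 : Matrix (Fin N₁) (Fin N₁) ℂ) + (ρ₁₁ : ℂ) • (H11 * H11ᴴ) -
        ((ρ₁₁ * ρ₁₂ : ℝ) : ℂ) • (H11 * H12ᴴ * B⁻¹ * (H12 * H11ᴴ))
      = 1 + ((ρ₁₁ : ℂ) • (H11 * C⁻¹)) * H11ᴴ := by
    rw [hCinv]
    push_cast
    simp only [Matrix.mul_sub, Matrix.sub_mul, Matrix.mul_one, Matrix.one_mul,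
      Matrix.smul_mul, Matrix.mul_smul, Matrix.mul_assoc, smul_smul, smul_sub]
    module
  have e1' : ((1 : Matrix (Fin N₁) (Fin N₁) ℂ) + (ρ₁₁ : ℂ) • (H11 * H11ᴴ) -
        ((ρ₁₁ * ρ₁₂ : ℝ) : ℂ) • (H11 * H12ᴴ * B⁻¹ * (H12 * H11ᴴ))).det
      = (C + (ρ₁₁ : ℂ) • (H11ᴴ * H11)).det * C.det⁻¹ := by
    rw [e1, Matrix.det_one_add_mul_comm]
    have : (1 : Matrix (Fin M₁) (Fin M₁) ℂ) + H11ᴴ * ((ρ₁₁ : ℂ) • (H11 * C⁻¹))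
        = (C + (ρ₁₁ : ℂ) • (H11ᴴ * H11)) * C⁻¹ := by
      rw [Matrix.add_mul, hCC, Matrix.smul_mul, Matrix.mul_smul, Matrix.mul_assoc]
    rw [this, Matrix.det_mul, Matrix.det_nonsing_inv, Ring.inverse_eq_inv']
  -- RHS factor 2
  have e2 : (1 : Matrix (Fin M₂) (Fin M₂) ℂ) + (ρ₂₂ : ℂ) • (H22ᴴ * H22) -
        ((ρ₂₂ * ρ₁₂ : ℝ) : ℂ) • (H22ᴴ * H12 * C⁻¹ * (H12ᴴ * H22))
      = 1 + ((ρ₂₂ : ℂ) • H22ᴴ) * B⁻¹ * H22 := by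
    rw [hBinv]
    push_cast
    simp only [Matrix.mul_sub, Matrix.sub_mul, Matrix.mul_one, Matrix.one_mul,
      Matrix.smul_mul, Matrix.mul_smul, Matrix.mul_assoc, smul_smul, smul_sub]
    module
  -- LHS factor 1
  have e3 : ((1 : Matrix (Fin N₂) (Fin N₂) ℂ) + (ρ₂₂ : ℂ) • (H22 * H22ᴴ) +
        (ρ₁₂ : ℂ) • (H12 * H12ᴴ)).det
      = B.det * ((1 : Matrix (Fin M₂) (Fin M₂) ℂ) + ((ρ₂₂ : ℂ) • H22ᴴ) * B⁻¹ * H22).det := by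
    have h1 : (1 : Matrix (Fin N₂) (Fin N₂) ℂ) + (ρ₂₂ : ℂ) • (H22 * H22ᴴ) +
        (ρ₁₂ : ℂ) • (H12 * H12ᴴ) = B + H22 * ((ρ₂₂ : ℂ) • H22ᴴ) := by
      rw [hBdef, Matrix.mul_smul]
      abel
    rw [h1, Matrix.det_add_mul _ _ hdetB, Matrix.mul_assoc]
  -- RHS factor 1 equals C + ρ₁₁ • (H11ᴴ * H11)
  have e4 : (1 : Matrix (Fin M₁) (Fin M₁) ℂ) + (ρ₁₁ : ℂ) • (H11ᴴ * H11) +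
        (ρ₁₂ : ℂ) • (H12ᴴ * H12) = C + (ρ₁₁ : ℂ) • (H11ᴴ * H11) := by
    rw [hCdef]; abel
  rw [e1', e2, e3, e4, hBC]
  have hC0 : C.det ≠ 0 := hdetC.ne_zero
  field_simp
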